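/- Let L be a finite multiset of real numbers with |L| = N ≥ 2 and let ε ∈ (0,1). Then there exists a function f : ℝ → ℝ such that x ≤ f(x) for every element x of L, the image multiset L.map(f) (obtained by applying f to every element of L, preserving multiplicities) is an ε-sketch of L, and L.map(f) has at most ⌈8/ε⌉ + ⌈8·ln(N)/ε⌉ + 8 distinct elements. -/

import Mathlib

/-- Checkpoint sequence: `c 0 = 0`, `c (t+1) = c t + 1 + ⌊eps * c t⌋`. -/
noncomputable def ckpt (eps : ℝ) : ℕ → ℕ
  | 0 => 0
  | t + 1 => ckpt eps t + 1 + ⌊eps * ckpt eps t⌋₊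

lemma ckpt_ge (eps : ℝ) : ∀ t, t ≤ ckpt eps t := by
  intro t
  induction t with
  | zero => simp [ckpt]
  | succ t ih => rw [ckpt]; omega

lemma ckpt_mono (eps : ℝ) : Monotone (ckpt eps) := by
  apply monotone_nat_of_le_succ
  intro t
  rw [ckpt]
  omega

lemma ckpt_growth (eps : ℝ) (h0 : 0 ≤ eps) : ∀ t, (1 + eps) ^ t ≤ (ckpt eps (t + 1) : ℝ) := by
  intro t
  induction t with
  | zero => simp [ckpt]
  | succ t ih =>
    have hfl : eps * (ckpt eps (t + 1) : ℝ) - 1 < (⌊eps * (ckpt eps (t + 1) : ℝ)⌋₊ : ℝ) :=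
      Nat.sub_one_lt_floor _
    have hck : (ckpt eps (t + 2) : ℝ)
        = (ckpt eps (t + 1) : ℝ) + 1 + (⌊eps * (ckpt eps (t + 1) : ℝ)⌋₊ : ℝ) := by
      rw [ckpt]; push_cast; ring
    have hpow : (0:ℝ) ≤ (1 + eps) ^ t := by positivity
    calc (1 + eps) ^ (t + 1) = (1 + eps) ^ t * (1 + eps) := by ring
      _ ≤ (ckpt eps (t + 1) : ℝ) * (1 + eps) := by nlinarith
      _ ≤ (ckpt eps (t + 2) : ℝ) := by nlinarith

/-- In a sorted list, the elements `< lam` form a prefix of length = filter length. -/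
lemma sorted_getD_lt_iff (lam : ℝ) : ∀ (l : List ℝ), l.Pairwise (· ≤ ·) → ∀ (j : ℕ), j < l.length →
    (l.getD j 0 < lam ↔ j < (l.filter (fun x => decide (x < lam))).length) := by
  intro l
  induction l with
  | nil => intro _ j hj; simp at hj
  | cons a t ih =>
    intro hs j hj
    have hst : t.Pairwise (· ≤ ·) := hs.of_cons
    by_cases ha : a < lam
    · rw [List.filter_cons_of_pos (by simpa using ha)]
      cases j with
      | zero => simpa using ha
      | succ j' =>
        simp only [List.getD_cons_succ, List.length_cons]
        rw [ih hst j' (by simpa using hj)]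
        omega
    · have hall : ∀ b ∈ a :: t, ¬ b < lam := by
        intro b hb
        rcases List.mem_cons.mp hb with rfl | hb'
        · exact ha
        · exact not_lt.mpr (le_trans (not_lt.mp ha) (List.rel_of_pairwise_cons hs hb'))
      have hf : (a :: t).filter (fun x => decide (x < lam)) = [] :=
        List.filter_eq_nil_iff.mpr (by intro b hb; simpa using hall b hb)
      rw [hf]
      simp only [List.length_nil, Nat.not_lt_zero, iff_false]
      exact hall _ (by rw [List.getD_eq_getElem _ 0 hj]; exact List.getElem_mem hj)

/-- If the first `s` entries of `l` satisfy `q`, then the filter has length ≥ s. -/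
lemma le_length_filter_of_prefix (l : List ℝ) (q : ℝ → Bool) (s : ℕ) (hs : s ≤ l.length)
    (h : ∀ j < s, q (l.getD j 0) = true) : s ≤ (l.filter q).length := by
  have htake : (l.take s).filter q = l.take s := by
    apply List.filter_eq_self.mpr
    intro b hb
    obtain ⟨i, hi, rfl⟩ := List.mem_iff_getElem.mp hb
    have hilen : i < s := by
      have := hi; simp only [List.length_take] at this; omega
    have hil : i < l.length := by
      have := hi; simp only [List.length_take] at this; omega
    have : (l.take s)[i] = l[i] := List.getElem_take
    rw [this, ← List.getD_eq_getElem l 0 hil]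
    exact h i hilen
  have hsplit : l.filter q = (l.take s).filter q ++ (l.drop s).filter q := by
    rw [← List.filter_append, List.take_append_drop]
  have : s ≤ ((l.take s).filter q).length := by
    rw [htake, List.length_take]; omega
  rw [hsplit, List.length_append]; omega



/-- The number of elements of the multiset `L` smaller than `lam`, with multiplicity. -/
noncomputable def cntLT (L : Multiset ℝ) (lam : ℝ) : ℕ := (L.filter (fun x => x < lam)).card

/-- `S` is an `eps`-sketch of `L`: for every threshold `lam`,
`(1 - eps)·cnt_{<lam}(L) ≤ cnt_{<lam}(S) ≤ cnt_{<lam}(L)`. -/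
def IsSketch (eps : ℝ) (S L : Multiset ℝ) : Prop :=
  ∀ lam : ℝ,
    (1 - eps) * (cntLT L lam : ℝ) ≤ (cntLT S lam : ℝ) ∧
    (cntLT S lam : ℝ) ≤ (cntLT L lam : ℝ)

theorem stmt14 (L : Multiset ℝ) (N : ℕ) (hN : 2 ≤ N) (hcard : Multiset.card L = N)
    (eps : ℝ) (heps0 : 0 < eps) (heps1 : eps < 1) :
    ∃ f : ℝ → ℝ, (∀ x ∈ L, x ≤ f x) ∧ IsSketch eps (L.map f) L ∧
      (L.map f).toFinset.card ≤ ⌈(8 : ℝ) / eps⌉₊ + ⌈8 * Real.log N / eps⌉₊ + 8 := by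
  classical
  set l := L.sort (· ≤ ·) with hl
  have hsort : l.Pairwise (· ≤ ·) := by rw [hl]; simp
  have hLl : (l : Multiset ℝ) = L := L.sort_eq _
  have hlen : l.length = N := by rw [hl, Multiset.length_sort, hcard]
  -- counting via filter
  have hcnt_list : ∀ lam : ℝ, cntLT L lam = (l.filter (fun x => decide (x < lam))).length := by
    intro lam
    rw [cntLT, ← hLl, Multiset.filter_coe, Multiset.coe_card]
  have hprefix : ∀ (lam : ℝ) (j : ℕ), j < N → (l.getD j 0 < lam ↔ j < cntLT L lam) := by
    intro lam j hj
    rw [hcnt_list lam]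
    exact sorted_getD_lt_iff lam l hsort j (by omega)
  have hk_le : ∀ lam : ℝ, cntLT L lam ≤ N := by
    intro lam
    rw [hcnt_list lam, ← hlen]
    exact List.length_filter_le _ l
  -- first-occurrence index
  have hm_le : ∀ j, j < N → cntLT L (l.getD j 0) ≤ j := by
    intro j hj
    by_contra hcon
    exact lt_irrefl _ ((hprefix (l.getD j 0) j hj).mpr (by omega))
  have hxm : ∀ x ∈ L, cntLT L x ≤ N - 1 ∧ l.getD (cntLT L x) 0 = x := by
    intro x hx
    have hxl : x ∈ l := by rw [← hLl] at hx; exact hx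
    obtain ⟨i, hi, rfl⟩ := List.mem_iff_getElem.mp hxl
    rw [← List.getD_eq_getElem l 0 hi]
    set x := l.getD i 0 with hxdef
    have hiN : i < N := by omega
    have hmi : cntLT L x ≤ i := hm_le i hiN
    have hmN : cntLT L x < N := by omega
    refine ⟨by omega, ?_⟩
    have h1 : ¬ l.getD (cntLT L x) 0 < x := by
      intro hcon
      exact lt_irrefl _ ((hprefix x _ hmN).mp hcon)
    have h2 : l.getD (cntLT L x) 0 ≤ x := by
      have h2' : l.getD (cntLT L x) 0 ≤ l.getD i 0 := by
        rw [List.getD_eq_getElem l 0 (by omega : cntLT L x < l.length),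
          List.getD_eq_getElem l 0 (by omega)]
        exact List.Pairwise.rel_get_of_le hsort (by exact hmi)
      exact h2'
    exact le_antisymm h2 (not_lt.mp h1)
  -- the rounding function
  have hcex : ∀ i : ℕ, ∃ t, i ≤ ckpt eps t := fun i => ⟨i, ckpt_ge eps i⟩
  set g : ℕ → ℕ := fun i => min (N - 1) (ckpt eps (Nat.find (hcex i))) with hg
  have hg_le : ∀ i, g i ≤ N - 1 := fun i => min_le_left _ _
  have hg_ge : ∀ i, i ≤ N - 1 → i ≤ g i := by
    intro i hi
    exact le_min hi (Nat.find_spec (hcex i))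
  set f : ℝ → ℝ := fun x => if x ∈ L then l.getD (g (cntLT L x)) 0 else x with hf
  have hfval : ∀ x ∈ L, f x = l.getD (g (cntLT L x)) 0 := by
    intro x hx; rw [hf]; simp [hx]
  -- f x ≥ x
  have hfge : ∀ x ∈ L, x ≤ f x := by
    intro x hx
    obtain ⟨hm1, hm2⟩ := hxm x hx
    rw [hfval x hx]
    conv_lhs => rw [← hm2]
    rw [List.getD_eq_getElem l 0 (by omega : cntLT L x < l.length),
      List.getD_eq_getElem l 0 (by have := hg_le (cntLT L x); omega : g (cntLT L x) < l.length)]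
    exact List.Pairwise.rel_get_of_le hsort (by exact hg_ge _ hm1)
  -- count of mapped multiset
  have hcnt_map : ∀ lam : ℝ, cntLT (L.map f) lam
      = (l.filter (fun x => decide (f x < lam))).length := by
    intro lam
    rw [cntLT, ← hLl, Multiset.map_coe, Multiset.filter_coe, Multiset.coe_card,
      List.filter_map, List.length_map]
    congr 1
  -- upper bound
  have hupper : ∀ lam : ℝ, cntLT (L.map f) lam ≤ cntLT L lam := by
    intro lam
    rw [hcnt_map lam, hcnt_list lam, ← List.countP_eq_length_filter,
      ← List.countP_eq_length_filter]
    apply List.countP_mono_left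
    intro a ha hfa
    have haL : a ∈ L := by rw [← hLl]; exact ha
    simp only [decide_eq_true_eq] at hfa
    simp only [decide_eq_true_eq]
    exact lt_of_le_of_lt (hfge a haL) hfa
  -- lower bound
  have hlower : ∀ lam : ℝ, (1 - eps) * (cntLT L lam : ℝ) ≤ (cntLT (L.map f) lam : ℝ) := by
    intro lam
    set k := cntLT L lam with hkdef
    rcases Nat.eq_zero_or_pos k with hk0 | hk1
    · rw [hk0]; push_cast; simp [mul_zero]
    · have hkN : k ≤ N := hk_le lam
      have hfind : ∃ t, k ≤ ckpt eps t := ⟨k, ckpt_ge eps k⟩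
      set t1 := Nat.find hfind with ht1
      have ht1pos : 0 < t1 := by
        rcases Nat.eq_zero_or_pos t1 with h | h
        · have := Nat.find_spec hfind
          rw [← ht1, h] at this
          simp [ckpt] at this; omega
        · exact h
      set p := ckpt eps (t1 - 1) with hp
      have hpk : p < k := by
        have := Nat.find_min hfind (m := t1 - 1) (by omega)
        omega
      have hkc : k ≤ p + 1 + ⌊eps * p⌋₊ := by
        have h1 : k ≤ ckpt eps t1 := Nat.find_spec hfind
        have h2 : t1 = (t1 - 1) + 1 := by omega
        rw [h2, ckpt] at h1
        exact h1
      -- all indices ≤ p map below lam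
      have hjp : ∀ j, j < p + 1 → decide (f (l.getD j 0) < lam) = true := by
        intro j hj
        have hjN : j < N := by omega
        have hxL : l.getD j 0 ∈ L := by
          rw [← hLl]
          rw [List.getD_eq_getElem l 0 (by omega)]
          exact Multiset.mem_coe.mpr (by exact List.getElem_mem (by omega))
        rw [hfval _ hxL]
        set m := cntLT L (l.getD j 0) with hm
        have hmj : m ≤ j := hm_le j hjN
        have hgm : g m ≤ p := by
          have hfind2 : Nat.find (hcex m) ≤ t1 - 1 :=
            Nat.find_min' (hcex m) (by omega : m ≤ ckpt eps (t1 - 1))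
          have : ckpt eps (Nat.find (hcex m)) ≤ p := ckpt_mono eps hfind2
          exact le_trans (min_le_right _ _) this
        have hgmN : g m < N := by omega
        simpa using (hprefix lam (g m) hgmN).mpr (by omega)
      have hcount : p + 1 ≤ cntLT (L.map f) lam := by
        rw [hcnt_map lam]
        exact le_length_filter_of_prefix l _ (p + 1) (by omega) hjp
      -- numeric inequality
      have hfloor : (⌊eps * p⌋₊ : ℝ) ≤ eps * p := Nat.floor_le (by positivity)
      have hpkR : (p : ℝ) ≤ (k : ℝ) := by exact_mod_cast le_of_lt hpk
      have hkR : (k : ℝ) ≤ (p : ℝ) + 1 + eps * p := by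
        have : (k : ℝ) ≤ (p : ℝ) + 1 + (⌊eps * p⌋₊ : ℝ) := by exact_mod_cast hkc
        linarith
      have hcR : ((p : ℝ) + 1) ≤ (cntLT (L.map f) lam : ℝ) := by exact_mod_cast hcount
      nlinarith
  -- distinct count bound
  have hTex : ∃ t, N - 1 ≤ ckpt eps t := ⟨N - 1, ckpt_ge eps (N - 1)⟩
  set T := Nat.find hTex with hT
  have hsub : (L.map f).toFinset
      ⊆ (Finset.range (T + 1)).image (fun t => l.getD (min (N - 1) (ckpt eps t)) 0) := by
    intro y hy
    rw [Multiset.mem_toFinset, Multiset.mem_map] at hy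
    obtain ⟨x, hxL, rfl⟩ := hy
    obtain ⟨hm1, _⟩ := hxm x hxL
    have ht0 : Nat.find (hcex (cntLT L x)) ≤ T :=
      Nat.find_min' (hcex (cntLT L x)) (le_trans hm1 (Nat.find_spec hTex))
    rw [hfval x hxL]
    apply Finset.mem_image.mpr
    exact ⟨Nat.find (hcex (cntLT L x)), Finset.mem_range.mpr (by omega), rfl⟩
  have hcard_le : (L.map f).toFinset.card ≤ T + 1 :=
    le_trans (Finset.card_le_card hsub) (le_trans (Finset.card_image_le) (by simp))
  -- bound on T
  set B := ⌈2 * Real.log N / eps⌉₊ with hB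
  have hlogN : (0:ℝ) ≤ Real.log N := Real.log_nonneg (by exact_mod_cast Nat.one_le_of_lt hN)
  have hlog1e : eps / 2 ≤ Real.log (1 + eps) := by
    have h2 : (0:ℝ) < 1 + eps := by linarith
    have h1 : Real.log (1 + eps)⁻¹ ≤ (1 + eps)⁻¹ - 1 :=
      Real.log_le_sub_one_of_pos (by positivity)
    rw [Real.log_inv] at h1
    have h5 : (1 + eps) * (1 + eps)⁻¹ = 1 := mul_inv_cancel₀ (ne_of_gt h2)
    have h6 : (0:ℝ) < (1 + eps)⁻¹ := by positivity
    nlinarith [sq_nonneg eps]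
  have hBbound : (N : ℝ) ≤ (1 + eps) ^ B := by
    have hBge : 2 * Real.log N / eps ≤ (B : ℝ) := Nat.le_ceil _
    have h1 : Real.log N ≤ (B : ℝ) * (eps / 2) := by
      rw [div_le_iff₀ heps0] at hBge
      nlinarith
    have h2 : Real.log N ≤ (B : ℝ) * Real.log (1 + eps) := by
      nlinarith [Nat.cast_nonneg (α := ℝ) B]
    calc (N : ℝ) = Real.exp (Real.log N) := (Real.exp_log (by positivity : (0:ℝ) < N)).symm
      _ ≤ Real.exp ((B : ℝ) * Real.log (1 + eps)) := Real.exp_le_exp.mpr h2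
      _ = (1 + eps) ^ B := by
          rw [← Real.log_pow, Real.exp_log (by positivity)]
  have hTB : T ≤ B + 1 := by
    apply Nat.find_min' hTex
    have h1 : ((N - 1 : ℕ) : ℝ) ≤ (ckpt eps (B + 1) : ℝ) := by
      have h2 : ((N - 1 : ℕ) : ℝ) ≤ (N : ℝ) := by
        push_cast [Nat.cast_sub (by omega : 1 ≤ N)]; norm_num
      calc ((N - 1 : ℕ) : ℝ) ≤ (N : ℝ) := h2
        _ ≤ (1 + eps) ^ B := hBbound
        _ ≤ (ckpt eps (B + 1) : ℝ) := ckpt_growth eps (le_of_lt heps0) B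
    exact_mod_cast h1
  have hBceil : B ≤ ⌈8 * Real.log N / eps⌉₊ := by
    apply Nat.ceil_le_ceil
    apply (div_le_div_iff_of_pos_right heps0).mpr
    nlinarith
  refine ⟨f, hfge, fun lam => ⟨hlower lam, by exact_mod_cast hupper lam⟩, ?_⟩
  omega
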